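/- Let χ: Λ³ℝⁿ → 𝕋 be a group homomorphism (a tricharacter, evaluated on wedges of vectors). Define Φ: C_c(ℝⁿ × ℝⁿ, ℂ) → C_c(ℝⁿ × ℝⁿ, ℂ) by Φ(K)(x,y) = K(x+y, y), and define the products (K₁·K₂)(t,s) = ∫_{ℝⁿ} χ(t∧r∧s)·K₁(t,r)·K₂(r,s) dr and (f•g)(t,s) = ∫_{ℝⁿ} χ(r∧t∧s)·f(r, s+t−r)·g(t−r, s) dr. Then Φ(K₁·K₂) = Φ(K₁)•Φ(K₂) for all K₁, K₂ ∈ C_c(ℝⁿ × ℝⁿ, ℂ). -/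

import Mathlib

open ExteriorAlgebra

noncomputable def wedge2 {n : ℕ} (x y : Fin n → ℝ) : ⋀[ℝ]^2 (Fin n → ℝ) :=
  ⟨ιMulti ℝ 2 ![x, y], ιMulti_range ℝ 2 (Set.mem_range_self _)⟩

noncomputable def wedge3 {n : ℕ} (x y z : Fin n → ℝ) : ⋀[ℝ]^3 (Fin n → ℝ) :=
  ⟨ιMulti ℝ 3 ![x, y, z], ιMulti_range ℝ 3 (Set.mem_range_self _)⟩

noncomputable def wedge12 {n : ℕ} (t : Fin n → ℝ) (θ : ⋀[ℝ]^2 (Fin n → ℝ)) :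
    ⋀[ℝ]^3 (Fin n → ℝ) :=
  ⟨ι ℝ t * (θ : ExteriorAlgebra ℝ (Fin n → ℝ)), by
    have h : (⋀[ℝ]^3 (Fin n → ℝ) : Submodule ℝ (ExteriorAlgebra ℝ (Fin n → ℝ)))
        = LinearMap.range (ι ℝ (M := Fin n → ℝ)) * ⋀[ℝ]^2 (Fin n → ℝ) := by
      show LinearMap.range (ι ℝ (M := Fin n → ℝ)) ^ (2 + 1) = _
      rw [pow_succ']
    rw [h]
    exact Submodule.mul_mem_mul (LinearMap.mem_range_self _ t) θ.2⟩

open MeasureTheory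

/-- `Φ(K)(x,y) = K(x+y, y)`. -/
noncomputable def Phi {n : ℕ} (K : (Fin n → ℝ) × (Fin n → ℝ) → ℂ) :
    (Fin n → ℝ) × (Fin n → ℝ) → ℂ :=
  fun p => K (p.1 + p.2, p.2)

/-- The `χ`-twisted convolution of kernels:
`(K₁·K₂)(t,s) = ∫ χ(t∧r∧s)·K₁(t,r)·K₂(r,s) dr`. -/
noncomputable def convK {n : ℕ} (χ : ⋀[ℝ]^3 (Fin n → ℝ) → ℂ)
    (K₁ K₂ : (Fin n → ℝ) × (Fin n → ℝ) → ℂ) : (Fin n → ℝ) × (Fin n → ℝ) → ℂ :=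
  fun p => ∫ r : Fin n → ℝ, χ (wedge3 p.1 r p.2) * K₁ (p.1, r) * K₂ (r, p.2)

/-- The Fell bundle convolution:
`(f•g)(t,s) = ∫ χ(r∧t∧s)·f(r, s+t−r)·g(t−r, s) dr`. -/
noncomputable def convF {n : ℕ} (χ : ⋀[ℝ]^3 (Fin n → ℝ) → ℂ)
    (f g : (Fin n → ℝ) × (Fin n → ℝ) → ℂ) : (Fin n → ℝ) × (Fin n → ℝ) → ℂ :=
  fun p => ∫ r : Fin n → ℝ, χ (wedge3 r p.1 p.2) * f (r, p.2 + p.1 - r) * g (p.1 - r, p.2)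


lemma gen_key' {R M : Type*} [CommRing R] [AddCommGroup M] [Module R M]
    (t s r : M) :
    (ι R t + ι R s) * (ι R r * ι R s) = (ι R t + ι R s - ι R r) * (ι R t * ι R s) := by
  have sq : ∀ m : M, ι R m * ι R m = 0 := ι_sq_zero
  have sw : ∀ x y : M, ι R x * ι R y = - (ι R y * ι R x) := fun x y =>
    eq_neg_of_add_eq_zero_left (ι_add_mul_swap x y)
  have h1 : ι R s * (ι R r * ι R s) = 0 := by
    rw [sw r s]
    rw [show ι R s * -(ι R s * ι R r) = -(ι R s * ι R s * ι R r) by noncomm_ring, sq]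
    noncomm_ring
  have h2 : ι R s * (ι R t * ι R s) = 0 := by
    rw [sw t s]
    rw [show ι R s * -(ι R s * ι R t) = -(ι R s * ι R s * ι R t) by noncomm_ring, sq]
    noncomm_ring
  have h3 : ι R t * (ι R t * ι R s) = 0 := by
    rw [show ι R t * (ι R t * ι R s) = ι R t * ι R t * ι R s by noncomm_ring, sq]
    noncomm_ring
  have h4 : ι R r * (ι R t * ι R s) = -(ι R t * (ι R r * ι R s)) := by
    rw [← mul_assoc, sw r t]; noncomm_ring
  rw [show (ι R t + ι R s) * (ι R r * ι R s)
      = ι R t * (ι R r * ι R s) + ι R s * (ι R r * ι R s) by noncomm_ring,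
    show (ι R t + ι R s - ι R r) * (ι R t * ι R s)
      = ι R t * (ι R t * ι R s) + ι R s * (ι R t * ι R s) - ι R r * (ι R t * ι R s) by noncomm_ring,
    h1, h2, h3, h4]
  noncomm_ring

lemma wedge3_key' {n : ℕ} (t s r : Fin n → ℝ) :
    wedge3 (t + s) r s = wedge3 (t + s - r) t s := by
  apply Subtype.ext
  show ιMulti ℝ 3 ![t + s, r, s] = ιMulti ℝ 3 ![t + s - r, t, s]
  simp only [ιMulti_apply]
  simp [List.ofFn_succ]
  exact gen_key' t s r

/-- `Φ` intertwines the twisted convolution of kernels with the Fell bundle convolution: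
`Φ(K₁·K₂) = Φ(K₁)•Φ(K₂)`. -/
theorem stmt15 (n : ℕ) (χ : ⋀[ℝ]^3 (Fin n → ℝ) → ℂ)
    (hχ1 : ∀ ξ, ‖χ ξ‖ = 1)
    (hχm : ∀ ξ₁ ξ₂, χ (ξ₁ + ξ₂) = χ ξ₁ * χ ξ₂)
    (K₁ K₂ : (Fin n → ℝ) × (Fin n → ℝ) → ℂ)
    (h₁ : Continuous K₁) (h₁c : HasCompactSupport K₁)
    (h₂ : Continuous K₂) (h₂c : HasCompactSupport K₂) :
    Phi (convK χ K₁ K₂) = convF χ (Phi K₁) (Phi K₂) := by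
  funext p
  obtain ⟨t, s⟩ := p
  show convK χ K₁ K₂ (t + s, s) = convF χ (Phi K₁) (Phi K₂) (t, s)
  simp only [convK, convF, Phi]
  rw [← MeasureTheory.integral_sub_left_eq_self
      (fun r => χ (wedge3 r t s) * K₁ (r + (s + t - r), s + t - r) * K₂ (t - r + s, s))
      volume (t + s)]
  congr 1
  funext r
  rw [show s + t - (t + s - r) = r from by abel, show t + s - r + r = t + s from by abel,
    show t - (t + s - r) + s = r from by abel, wedge3_key']
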